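/- arXiv:2310.10272 — 3 statements merged into one kernel-verified Lean document; each statement's English description precedes it below -/
import Mathlib

section
/- Let 0 < σ < exp(2(1-N)/N) and f_σ(x) = σ^{-N} exp(-|x|²/σ²). There exists δ > 0 such that for every point s₀ ∈ ℝ^N with |s₀| = δ and for n = -s₀/|s₀|, one has (N-1)/δ - (∇f_σ(s₀)·n) / (2(1 + f_σ(s₀))) < 0. -/
open Real InnerProductSpace

lemma grad_f (N : ℕ) (σ : ℝ) (s₀ : EuclideanSpace ℝ (Fin N)) :
    HasGradientAt (fun x : EuclideanSpace ℝ (Fin N) => exp (-‖x‖^2 / σ^2) / σ^N)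
      ((exp (-‖s₀‖^2 / σ^2) / σ^N * (-2 / σ^2)) • s₀) s₀ := by
  rw [hasGradientAt_iff_hasFDerivAt]
  have h1 : HasFDerivAt (fun x : EuclideanSpace ℝ (Fin N) => ‖x‖ ^ 2)
      (2 • (innerSL ℝ s₀)) s₀ := (hasStrictFDerivAt_norm_sq s₀).hasFDerivAt
  have h2 := ((h1.const_mul (-(σ^2)⁻¹)).exp).const_mul ((σ^N)⁻¹)
  convert h2 using 1
  · rfl
  · funext x
    rw [div_eq_mul_inv, mul_comm, neg_div, div_eq_mul_inv, mul_comm (‖x‖^2)]; ring_nf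
  · ext y
    simp [InnerProductSpace.toDual_apply_apply, real_inner_smul_left, div_eq_mul_inv, neg_div]
    ring

lemma main_aux (N : ℕ) (hN : 1 ≤ N) (σ : ℝ) (hσ0 : 0 < σ)
    (hσ : σ < exp (2 * (1 - (N : ℝ)) / N)) :
    ∃ δ > 0, ∀ s₀ : EuclideanSpace ℝ (Fin N), ‖s₀‖ = δ →
      ((N : ℝ) - 1) / δ -
        (inner ℝ (gradient (fun x : EuclideanSpace ℝ (Fin N) => exp (-‖x‖^2 / σ^2) / σ^N) s₀)
          (-(‖s₀‖⁻¹) • s₀) : ℝ) /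
          (2 * (1 + exp (-‖s₀‖^2 / σ^2) / σ^N)) < 0 := by
  have hNpos : (0:ℝ) < N := by exact_mod_cast hN
  set δ : ℝ := σ * Real.sqrt N with hδdef
  have hδ : 0 < δ := mul_pos hσ0 (Real.sqrt_pos.2 hNpos)
  have hδ2 : δ ^ 2 = σ ^ 2 * N := by
    rw [hδdef, mul_pow, Real.sq_sqrt hNpos.le]
  refine ⟨δ, hδ, ?_⟩
  intro s₀ hs
  set v : ℝ := exp (-(N:ℝ)) / σ ^ N with hvdef
  have hvpos : 0 < v := by positivity
  have hexp : exp (-‖s₀‖^2 / σ^2) = exp (-(N:ℝ)) := by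
    congr 1
    rw [hs, hδ2]
    field_simp
  -- key bound : N - 1 < v
  have hσN : σ ^ N < exp (2 * (1 - (N:ℝ))) := by
    have h1 : σ ^ N < (exp (2 * (1 - (N:ℝ)) / N)) ^ N :=
      pow_lt_pow_left₀ hσ hσ0.le (by omega)
    have h2 : (exp (2 * (1 - (N:ℝ)) / N)) ^ N = exp (2 * (1 - (N:ℝ))) := by
      rw [← Real.exp_nat_mul]
      congr 1
      field_simp
    rwa [h2] at h1
  have hv' : (N:ℝ) - 1 < v := by
    rw [hvdef, lt_div_iff₀ (pow_pos hσ0 N)]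
    rcases eq_or_lt_of_le hN with h | h
    · simp [← h, Real.exp_pos]
    · have hN1 : (0:ℝ) < (N:ℝ) - 1 := by
        have : (2:ℝ) ≤ N := by exact_mod_cast h
        linarith
      have h5 : (N:ℝ) - 1 ≤ exp ((N:ℝ) - 2) := by
        have := Real.add_one_le_exp ((N:ℝ) - 2); linarith
      calc ((N:ℝ) - 1) * σ ^ N < ((N:ℝ) - 1) * exp (2 * (1 - (N:ℝ))) :=
            mul_lt_mul_of_pos_left hσN hN1
        _ ≤ exp ((N:ℝ) - 2) * exp (2 * (1 - (N:ℝ))) :=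
            mul_le_mul_of_nonneg_right h5 (Real.exp_pos _).le
        _ = exp (-(N:ℝ)) := by rw [← Real.exp_add]; ring_nf
  -- gradient and inner product
  have hgrad := (grad_f N σ s₀).gradient
  rw [hgrad]
  have hinner : (inner ℝ ((exp (-‖s₀‖^2 / σ^2) / σ^N * (-2 / σ^2)) • s₀)
      (-(‖s₀‖⁻¹) • s₀) : ℝ) = 2 * v * δ / σ ^ 2 := by
    rw [real_inner_smul_left, real_inner_smul_right, real_inner_self_eq_norm_sq, hexp, hs]
    rw [hvdef]
    field_simp
  rw [hinner, hexp, ← hvdef, sub_neg]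
  rw [div_lt_div_iff₀ hδ (by positivity)]
  have h4 : 2 * v * δ / σ ^ 2 * δ = 2 * v * N := by
    field_simp
    linear_combination v * hδ2 + (σ ^ 2 * (1 - v)) * Real.sq_sqrt hNpos.le
  rw [h4]
  nlinarith [hv', hvpos, hNpos]

open Real in
/-- For `σ < exp(2(1-N)/N)` and `f_σ(x) = σ^{-N} exp(-|x|²/σ²)`, there is a distance
`δ > 0` at which the Gaussian repulsion dominates the curvature bound: for every `s₀`
with `|s₀| = δ` and inner normal `n = -s₀/|s₀|`,
`(N-1)/δ - (∇f_σ(s₀)·n)/(2(1+f_σ(s₀))) < 0`. -/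
theorem stmt_5 (N : ℕ) (hN : 1 ≤ N) (σ : ℝ) (hσ0 : 0 < σ)
    (hσ : σ < exp (2 * (1 - (N : ℝ)) / N)) :
    let fσ : EuclideanSpace ℝ (Fin N) → ℝ := fun x => exp (-‖x‖^2 / σ^2) / σ^N
    ∃ δ > 0, ∀ s₀ : EuclideanSpace ℝ (Fin N), ‖s₀‖ = δ →
      ((N : ℝ) - 1) / δ -
        (inner ℝ (gradient fσ s₀) (-(‖s₀‖⁻¹) • s₀) : ℝ) / (2 * (1 + fσ s₀)) < 0 := by
  intro fσ
  exact main_aux N hN σ hσ0 hσ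
end

section
/- Let w : [0,∞) → ℝ be C¹ with w(0) = 0, 0 ≤ w ≤ 1, w' integrable, and lim_{x→∞} w(x) = 1. For σ > 0 define n^σ : ℝ^N \ {0} → ℝ^N by n^σ(x) = -w(|x|/σ)·x/|x|. Then the skeletal term satisfies S n^σ(x) := ⟨n^σ(x), (Dn^σ(x))ᵀ n^σ(x)⟩ = -(1/σ)·w(|x|/σ)²·w'(|x|/σ) for all x ≠ 0. -/
open ContinuousLinearMap

lemma hasFDerivAt_norm' {E : Type*} [NormedAddCommGroup E] [InnerProductSpace ℝ E]
    (x : E) (hx : x ≠ 0) :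
    HasFDerivAt (fun y : E => ‖y‖) ((‖x‖⁻¹ : ℝ) • (innerSL ℝ x)) x := by
  have hr : (0:ℝ) < ‖x‖ := norm_pos_iff.2 hx
  have h2 : HasFDerivAt (fun y : E => ‖y‖ ^ 2) (2 • innerSL ℝ x) x :=
    (hasStrictFDerivAt_norm_sq x).hasFDerivAt
  have hs : HasDerivAt Real.sqrt (1 / (2 * Real.sqrt (‖x‖ ^ 2))) (‖x‖ ^ 2) :=
    Real.hasDerivAt_sqrt (by positivity)
  have h3 := hs.comp_hasFDerivAt x h2
  have heq : (fun y : E => Real.sqrt (‖y‖ ^ 2)) = fun y : E => ‖y‖ := by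
    funext y; rw [Real.sqrt_sq (norm_nonneg y)]
  simp only [Function.comp_def] at h3
  rw [heq] at h3
  refine h3.congr_fderiv ?_
  rw [Real.sqrt_sq hr.le]
  ext v
  simp only [ContinuousLinearMap.smul_apply, smul_eq_mul, two_smul,
    ContinuousLinearMap.add_apply]
  field_simp
  ring

/-- For a `C¹` profile `w` with `w(0) = 0`, `0 ≤ w ≤ 1` on `[0,∞)`, integrable derivative and
`w(∞) = 1`, the radial field `n^σ(x) = -w(|x|/σ) x/|x|` has skeletal term
`S n^σ(x) = ⟨n^σ(x), (Dn^σ(x))ᵀ n^σ(x)⟩ = -(1/σ) w(|x|/σ)² w'(|x|/σ)` for all `x ≠ 0`. -/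
theorem stmt_10 (N : ℕ) (σ : ℝ) (hσ : 0 < σ)
    (w : ℝ → ℝ) (hw : ContDiff ℝ 1 w) (hw0 : w 0 = 0)
    (hwbd : ∀ x ≥ (0:ℝ), 0 ≤ w x ∧ w x ≤ 1)
    (hw' : MeasureTheory.Integrable (deriv w))
    (hwlim : Filter.Tendsto w Filter.atTop (nhds 1)) :
    let nσ : EuclideanSpace ℝ (Fin N) → EuclideanSpace ℝ (Fin N) :=
      fun x => -(w (‖x‖ / σ) / ‖x‖) • x
    ∀ x : EuclideanSpace ℝ (Fin N), x ≠ 0 →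
      (inner ℝ (nσ x) (fderiv ℝ nσ x (nσ x)) : ℝ)
        = -(1/σ) * w (‖x‖ / σ)^2 * deriv w (‖x‖ / σ) := by
  intro nσ x hx
  have hr : (0:ℝ) < ‖x‖ := norm_pos_iff.2 hx
  set r : ℝ := ‖x‖ with hrdef
  set a : ℝ := w (r / σ) with hadef
  set a' : ℝ := deriv w (r / σ) with ha'def
  -- derivative of the scalar profile t ↦ -(w (t/σ) / t) at r
  have h1 : HasDerivAt w a' (r / σ) :=
    ((hw.differentiable one_ne_zero) (r / σ)).hasDerivAt
  have h2 : HasDerivAt (fun t : ℝ => w (t / σ)) (a' * σ⁻¹) r := by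
    have hid : HasDerivAt (fun t : ℝ => t / σ) σ⁻¹ r := by
      simpa using (hasDerivAt_id r).div_const σ
    exact h1.comp r hid
  have h3 : HasDerivAt (fun t : ℝ => w (t / σ) / t)
      ((a' * σ⁻¹ * r - a * 1) / r ^ 2) r := h2.div (hasDerivAt_id r) hr.ne'
  have h4 : HasDerivAt (fun t : ℝ => -(w (t / σ) / t))
      (-((a' * σ⁻¹ * r - a * 1) / r ^ 2)) r := h3.neg
  set c' : ℝ := -((a' * σ⁻¹ * r - a * 1) / r ^ 2) with hc'def
  have hn : HasFDerivAt (fun y : EuclideanSpace ℝ (Fin N) => ‖y‖)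
      ((r⁻¹ : ℝ) • (innerSL ℝ x)) x := hasFDerivAt_norm' x hx
  have hc : HasFDerivAt (fun y : EuclideanSpace ℝ (Fin N) => -(w (‖y‖ / σ) / ‖y‖))
      (c' • ((r⁻¹ : ℝ) • (innerSL ℝ x))) x := h4.comp_hasFDerivAt (f := fun y : EuclideanSpace ℝ (Fin N) => ‖y‖) x hn
  have hf : HasFDerivAt nσ
      ((-(a / r)) • (ContinuousLinearMap.id ℝ (EuclideanSpace ℝ (Fin N)))
        + (c' • ((r⁻¹ : ℝ) • (innerSL ℝ x))).smulRight x) x := by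
    exact hc.smul (hasFDerivAt_id x)
  rw [hf.fderiv]
  have hnx : nσ x = (-(a / r)) • x := rfl
  rw [hnx]
  simp only [ContinuousLinearMap.add_apply, ContinuousLinearMap.smul_apply,
    ContinuousLinearMap.id_apply, ContinuousLinearMap.smulRight_apply,
    innerSL_apply_apply, map_smul, smul_eq_mul, inner_add_right, real_inner_smul_left,
    real_inner_smul_right, real_inner_self_eq_norm_sq, norm_smul, norm_neg,
    Real.norm_eq_abs, mul_pow, sq_abs, abs_div, abs_norm]
  rw [hc'def]
  field_simp
  simp only [← hrdef, sq_abs]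
  ring
end

section
/- Let Ω ⊂ ℝ^N be open with nonempty compact boundary, let d(x) = dist(x, ∂Ω), and suppose x ∉ ∂Ω is such that there exist two distinct points y₁ ≠ y₂ ∈ ∂Ω with |x - y₁| = |x - y₂| = d(x). Then d is not differentiable at x. -/
open Metric

/-- Along a direction pointing to a nearest point of `F`, the derivative of the distance
function is `-‖v‖`. -/
lemma aux_dir {E : Type*} [NormedAddCommGroup E] [NormedSpace ℝ E]
    (F : Set E) (x : E) (f : E →L[ℝ] ℝ)
    (hf : HasFDerivAt (fun z => Metric.infDist z F) f x)
    (v : E) (hv : x + v ∈ F) (hnv : ‖v‖ = Metric.infDist x F) :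
    f v = -‖v‖ := by
  set h : ℝ → ℝ := fun t => infDist (x + t • v) F with hh
  have hL : HasDerivAt (fun t : ℝ => x + t • v) v 0 := by
    simpa using ((hasDerivAt_id (0 : ℝ)).smul_const v).const_add x
  have hf' : HasFDerivAt (fun z => Metric.infDist z F) f (x + (0:ℝ) • v) := by simpa using hf
  have hder : HasDerivAt h (f v) 0 := by have := hf'.comp_hasDerivAt 0 hL; exact this
  -- h t = infDist x F - t * ‖v‖ on [0,1]
  have heq : ∀ t ∈ Set.Icc (0:ℝ) 1, h t = infDist x F - t * ‖v‖ := by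
    intro t ht
    have h1 : infDist (x + t • v) F ≤ (1 - t) * ‖v‖ := by
      have := infDist_le_dist_of_mem (x := x + t • v) hv
      calc infDist (x + t • v) F ≤ dist (x + t • v) (x + v) := this
        _ = ‖(t - 1) • v‖ := by
            have he : (x + t • v) - (x + v) = (t - 1) • v := by
              rw [sub_smul]; module
            rw [dist_eq_norm, he]
        _ = (1 - t) * ‖v‖ := by
            rw [norm_smul, Real.norm_eq_abs, abs_of_nonpos (by linarith [ht.2])]
            ring
    have h2 : infDist x F ≤ infDist (x + t • v) F + t * ‖v‖ := by
      have := infDist_le_infDist_add_dist (x := x) (y := x + t • v) (s := F)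
      have hd : dist x (x + t • v) = t * ‖v‖ := by
        rw [dist_eq_norm]
        simp [norm_smul, Real.norm_eq_abs, abs_of_nonneg ht.1]
      linarith
    have : infDist (x + t • v) F = infDist x F - t * ‖v‖ := by nlinarith
    simpa [hh] using this
  have hU : UniqueDiffWithinAt ℝ (Set.Icc (0:ℝ) 1) 0 :=
    (uniqueDiffOn_Icc zero_lt_one) 0 ⟨le_refl 0, zero_le_one⟩
  have hlin : HasDerivAt (fun t : ℝ => infDist x F - t * ‖v‖) (-‖v‖) 0 := by
    simpa using ((hasDerivAt_id (0 : ℝ)).mul_const ‖v‖).const_sub (infDist x F)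
  have hB : HasDerivWithinAt h (-‖v‖) (Set.Icc (0:ℝ) 1) 0 :=
    (hlin.hasDerivWithinAt).congr heq (by simpa [hh] using heq 0 ⟨le_refl 0, zero_le_one⟩)
  have h1 := (hder.hasDerivWithinAt (s := Set.Icc (0:ℝ) 1)).derivWithin hU
  have h2 := hB.derivWithin hU
  rw [h1] at h2
  exact h2

/-- The derivative of the distance function is bounded below by `-‖w‖` in direction `w`. -/
lemma aux_ge {E : Type*} [NormedAddCommGroup E] [NormedSpace ℝ E]
    (F : Set E) (x : E) (f : E →L[ℝ] ℝ)
    (hf : HasFDerivAt (fun z => Metric.infDist z F) f x) (w : E) :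
    -‖w‖ ≤ f w := by
  set h : ℝ → ℝ := fun t => infDist (x + t • w) F with hh
  have hL : HasDerivAt (fun t : ℝ => x + t • w) w 0 := by
    simpa using ((hasDerivAt_id (0 : ℝ)).smul_const w).const_add x
  have hf' : HasFDerivAt (fun z => Metric.infDist z F) f (x + (0:ℝ) • w) := by simpa using hf
  have hder : HasDerivAt h (f w) 0 := by have := hf'.comp_hasDerivAt 0 hL; exact this
  have hderW : HasDerivWithinAt h (f w) (Set.Ici (0:ℝ)) 0 := hder.hasDerivWithinAt
  rw [hasDerivWithinAt_iff_tendsto_slope] at hderW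
  have hset : Set.Ici (0:ℝ) \ {0} = Set.Ioi 0 := by
    ext t; simp [lt_iff_le_and_ne, eq_comm]
  rw [hset] at hderW
  refine ge_of_tendsto hderW ?_
  filter_upwards [self_mem_nhdsWithin] with t ht
  have ht0 : 0 < t := ht
  have hlip : infDist x F ≤ h t + t * ‖w‖ := by
    have := infDist_le_infDist_add_dist (x := x) (y := x + t • w) (s := F)
    have hd : dist x (x + t • w) = t * ‖w‖ := by
      rw [dist_eq_norm]
      simp [norm_smul, Real.norm_eq_abs, abs_of_nonneg ht0.le]
    simp only [hh]
    linarith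
  have h0 : h 0 = infDist x F := by simp [hh]
  have key : -‖w‖ ≤ (h t - h 0) / t := by
    rw [le_div_iff₀ ht0, h0]; nlinarith
  simpa [slope_def_field] using key

set_option maxHeartbeats 1000000 in
/-- If `x ∉ ∂Ω` has two distinct nearest points on the (compact nonempty) boundary of an
open set `Ω`, the distance function to `∂Ω` is not differentiable at `x`. -/
theorem stmt_18 (N : ℕ) (Ω : Set (EuclideanSpace ℝ (Fin N)))
    (hΩ : IsOpen Ω) (hfr : (frontier Ω).Nonempty) (hcomp : IsCompact (frontier Ω))
    (x : EuclideanSpace ℝ (Fin N)) (hx : x ∉ frontier Ω)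
    (y₁ y₂ : EuclideanSpace ℝ (Fin N)) (hy₁ : y₁ ∈ frontier Ω) (hy₂ : y₂ ∈ frontier Ω)
    (hne : y₁ ≠ y₂)
    (hmin₁ : dist x y₁ = Metric.infDist x (frontier Ω))
    (hmin₂ : dist x y₂ = Metric.infDist x (frontier Ω)) :
    ¬ DifferentiableAt ℝ (fun z => Metric.infDist z (frontier Ω)) x := by
  intro hdiff
  set F := frontier Ω with hF
  set d := infDist x F with hd
  have hdpos : 0 < d := by
    rw [hd]
    exact (isClosed_frontier.notMem_iff_infDist_pos hfr).mp hx
  set f := fderiv ℝ (fun z => infDist z F) x with hf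
  have hfd : HasFDerivAt (fun z => infDist z F) f x := hdiff.hasFDerivAt
  set v₁ := y₁ - x with hv₁
  set v₂ := y₂ - x with hv₂
  have hn₁ : ‖v₁‖ = d := by rw [hv₁, ← dist_eq_norm']; exact hmin₁
  have hn₂ : ‖v₂‖ = d := by rw [hv₂, ← dist_eq_norm']; exact hmin₂
  have hfv₁ : f v₁ = -d := by
    have := aux_dir F x f hfd v₁ (by simpa [hv₁] using hy₁) (by rw [hn₁])
    rwa [hn₁] at this
  have hfv₂ : f v₂ = -d := by
    have := aux_dir F x f hfd v₂ (by simpa [hv₂] using hy₂) (by rw [hn₂])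
    rwa [hn₂] at this
  have hsum : f (v₁ + v₂) = -(2 * d) := by
    rw [map_add, hfv₁, hfv₂]; ring
  have hge := aux_ge F x f hfd (v₁ + v₂)
  rw [hsum] at hge
  have hnormge : 2 * d ≤ ‖v₁ + v₂‖ := by linarith
  -- now use the inner product structure: equality in Cauchy-Schwarz forces v₁ = v₂
  have hinner : @inner ℝ _ _ v₁ v₂ = ‖v₁‖ * ‖v₂‖ := by
    have hle := real_inner_le_norm v₁ v₂
    have hexp : ‖v₁ + v₂‖ ^ 2 = ‖v₁‖ ^ 2 + 2 * @inner ℝ _ _ v₁ v₂ + ‖v₂‖ ^ 2 := by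
      rw [← real_inner_self_eq_norm_sq, ← real_inner_self_eq_norm_sq,
        ← real_inner_self_eq_norm_sq, inner_add_add_self]
      rw [real_inner_comm v₂ v₁]; ring
    have hsq : (2 * d) ^ 2 ≤ ‖v₁ + v₂‖ ^ 2 := by
      apply sq_le_sq' <;> nlinarith [norm_nonneg (v₁ + v₂)]
    rw [hn₁, hn₂]
    nlinarith
  have := (inner_eq_norm_mul_iff_real).mp hinner
  rw [hn₁, hn₂] at this
  have hveq : v₁ = v₂ := smul_right_injective _ hdpos.ne' this
  exact hne (sub_left_injective hveq)
end
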